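/- Let p ∈ ℂ[X] be a Shabat polynomial of degree n ≥ 2 with leading coefficient aₙ. Let x₁, …, x_s be the distinct roots of p − 1 with multiplicities k₁, …, k_s, and y₁, …, y_t the distinct roots of p + 1 with multiplicities l₁, …, l_t. Then the derivative of p factors as p'(X) = n·aₙ · ∏_{i=1}^{s} (X − xᵢ)^{kᵢ−1} · ∏_{j=1}^{t} (X − yⱼ)^{lⱼ−1}. -/

import Mathlib

open Polynomial

/-- For a Shabat polynomial `p` of degree `n ≥ 2` with leading coefficient `aₙ`,
the derivative factors as
`p' = n·aₙ · ∏ (X − xᵢ)^(kᵢ−1) · ∏ (X − yⱼ)^(lⱼ−1)`,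
where the `xᵢ` (resp. `yⱼ`) are the distinct roots of `p − 1` (resp. `p + 1`) with
multiplicities `kᵢ` (resp. `lⱼ`). -/
theorem shabat_derivative_factorization
    (p : Polynomial ℂ) (n : ℕ) (hn : 2 ≤ n) (hdeg : p.natDegree = n)
    (hShabat : ∀ z : ℂ, (Polynomial.derivative p).eval z = 0 →
      p.eval z = 1 ∨ p.eval z = -1) :
    Polynomial.derivative p =
      Polynomial.C ((n : ℂ) * p.leadingCoeff) *
      (∏ x ∈ (p - 1).roots.toFinset,
        (Polynomial.X - Polynomial.C x) ^ ((p - 1).rootMultiplicity x - 1)) *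
      (∏ y ∈ (p + 1).roots.toFinset,
        (Polynomial.X - Polynomial.C y) ^ ((p + 1).rootMultiplicity y - 1)) := by
  classical
  set q := Polynomial.derivative p with hq
  have hnd : 0 < p.natDegree := by omega
  have hq0 : q ≠ 0 := by
    intro h
    have := Polynomial.natDegree_eq_zero_of_derivative_eq_zero h
    omega
  have hdq : q.natDegree = n - 1 := by
    have h1 := Polynomial.degree_derivative_eq p hnd
    rw [hdeg] at h1
    exact Polynomial.natDegree_eq_of_degree_eq_some h1
  -- nonvanishing of p - 1 and p + 1
  have hdeg1 : (p - 1).natDegree = n := by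
    rw [← hdeg, show (1 : ℂ[X]) = Polynomial.C 1 by simp, Polynomial.natDegree_sub_C]
  have hdeg2 : (p + 1).natDegree = n := by
    rw [← hdeg, show (1 : ℂ[X]) = Polynomial.C 1 by simp, Polynomial.natDegree_add_C]
  have hp1 : p - 1 ≠ 0 := by intro h; rw [h] at hdeg1; simp at hdeg1; omega
  have hp2 : p + 1 ≠ 0 := by intro h; rw [h] at hdeg2; simp at hdeg2; omega
  have hd1 : Polynomial.derivative (p - 1) = q := by simp [hq]
  have hd2 : Polynomial.derivative (p + 1) = q := by simp [hq]
  -- key multiplicity identity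
  have key : ∀ z : ℂ, q.rootMultiplicity z =
      ((p - 1).rootMultiplicity z - 1) + ((p + 1).rootMultiplicity z - 1) := by
    intro z
    by_cases h1 : (p - 1).IsRoot z
    · have he1 : p.eval z = 1 := by
        have := h1; simp [Polynomial.IsRoot, Polynomial.eval_sub] at this
        linear_combination this
      have h2 : ¬ (p + 1).IsRoot z := by
        simp [Polynomial.IsRoot, Polynomial.eval_add, he1]
      rw [Polynomial.rootMultiplicity_eq_zero h2]
      have := Polynomial.derivative_rootMultiplicity_of_root h1
      rw [hd1] at this
      omega
    · by_cases h2 : (p + 1).IsRoot z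
      · have := Polynomial.derivative_rootMultiplicity_of_root h2
        rw [hd2] at this
        rw [Polynomial.rootMultiplicity_eq_zero h1]
        omega
      · have hqz : ¬ q.IsRoot z := by
          intro hz
          rcases hShabat z hz with h | h
          · exact h1 (by simp [Polynomial.IsRoot, Polynomial.eval_sub, h])
          · exact h2 (by simp [Polynomial.IsRoot, Polynomial.eval_add, h])
        rw [Polynomial.rootMultiplicity_eq_zero hqz,
          Polynomial.rootMultiplicity_eq_zero h1, Polynomial.rootMultiplicity_eq_zero h2]
  -- leading coefficient of q
  have hlc : q.leadingCoeff = (n : ℂ) * p.leadingCoeff := by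
    rw [Polynomial.leadingCoeff, hdq, hq, Polynomial.coeff_derivative]
    rw [Polynomial.leadingCoeff, hdeg]
    have h1 : n - 1 + 1 = n := by omega
    rw [h1, mul_comm]
    congr 1
    push_cast [Nat.cast_sub (show 1 ≤ n by omega)]
    ring
  -- factorization of q over its roots
  have hsplit : q = Polynomial.C q.leadingCoeff *
      ∏ z ∈ q.roots.toFinset, (Polynomial.X - Polynomial.C z) ^ q.rootMultiplicity z := by
    have h := Polynomial.Splits.eq_prod_roots (IsAlgClosed.splits q)
    rw [Finset.prod_multiset_map_count] at h
    simpa only [Polynomial.count_roots] using h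
  -- union set
  set U : Finset ℂ := (p - 1).roots.toFinset ∪ (p + 1).roots.toFinset with hU
  have hsub : q.roots.toFinset ⊆ U := by
    intro z hz
    rw [Multiset.mem_toFinset, Polynomial.mem_roots hq0] at hz
    rcases hShabat z hz with h | h
    · exact Finset.mem_union_left _ (by
        rw [Multiset.mem_toFinset, Polynomial.mem_roots hp1]
        simp [Polynomial.IsRoot, h])
    · exact Finset.mem_union_right _ (by
        rw [Multiset.mem_toFinset, Polynomial.mem_roots hp2]
        simp [Polynomial.IsRoot, h])
  have hprodU : (∏ z ∈ q.roots.toFinset, (Polynomial.X - Polynomial.C z) ^ q.rootMultiplicity z)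
      = ∏ z ∈ U, (Polynomial.X - Polynomial.C z) ^ q.rootMultiplicity z := by
    refine Finset.prod_subset hsub ?_
    intro z _ hz
    rw [Multiset.mem_toFinset, Polynomial.mem_roots hq0] at hz
    rw [Polynomial.rootMultiplicity_eq_zero (by simpa using hz), pow_zero]
  have hsplitU : (∏ z ∈ U, (Polynomial.X - Polynomial.C z) ^ q.rootMultiplicity z)
      = (∏ z ∈ U, (Polynomial.X - Polynomial.C z) ^ ((p - 1).rootMultiplicity z - 1)) *
        (∏ z ∈ U, (Polynomial.X - Polynomial.C z) ^ ((p + 1).rootMultiplicity z - 1)) := by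
    rw [← Finset.prod_mul_distrib]
    refine Finset.prod_congr rfl fun z _ => ?_
    rw [key z, pow_add]
  have hA : (∏ z ∈ U, (Polynomial.X - Polynomial.C z) ^ ((p - 1).rootMultiplicity z - 1))
      = ∏ x ∈ (p - 1).roots.toFinset,
          (Polynomial.X - Polynomial.C x) ^ ((p - 1).rootMultiplicity x - 1) := by
    refine (Finset.prod_subset Finset.subset_union_left ?_).symm
    intro z _ hz
    rw [Multiset.mem_toFinset, Polynomial.mem_roots hp1] at hz
    rw [Polynomial.rootMultiplicity_eq_zero (by simpa using hz)]
    simp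
  have hB : (∏ z ∈ U, (Polynomial.X - Polynomial.C z) ^ ((p + 1).rootMultiplicity z - 1))
      = ∏ y ∈ (p + 1).roots.toFinset,
          (Polynomial.X - Polynomial.C y) ^ ((p + 1).rootMultiplicity y - 1) := by
    refine (Finset.prod_subset Finset.subset_union_right ?_).symm
    intro z _ hz
    rw [Multiset.mem_toFinset, Polynomial.mem_roots hp2] at hz
    rw [Polynomial.rootMultiplicity_eq_zero (by simpa using hz)]
    simp
  calc q = Polynomial.C q.leadingCoeff *
      ∏ z ∈ q.roots.toFinset, (Polynomial.X - Polynomial.C z) ^ q.rootMultiplicity z := hsplit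
    _ = _ := by rw [hprodU, hsplitU, hlc, hA, hB, mul_assoc]
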